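/- Let f be a finite composition of generalized Hénon maps over ℂ and let d = deg(f) ≥ 2 be its degree. Then the sequence of functions G_n(p) = d^{-n} log⁺ ‖f^n(p)‖ converges, uniformly on every bounded subset of ℂ², to a continuous function G⁺ : ℂ² → [0, ∞) which satisfies: (1) G⁺(f(p)) = d · G⁺(p) for all p ∈ ℂ²; (2) the function p ↦ G⁺(p) − log⁺‖p‖ is bounded from above on ℂ²; (3) G⁺(p) = 0 if and only if the forward orbit (f^n(p))_{n ≥ 0} is bounded. -/

import Mathlib

noncomputable section

/-- The generalized Hénon map associated to data `(a, P)`: `(x,y) ↦ (a y, x + P(y))`. -/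
def genHenonMap (c : ℂ × Polynomial ℂ) : ℂ × ℂ → ℂ × ℂ :=
  fun p => (c.1 * p.2, p.1 + c.2.eval p.2)

namespace S13
open Polynomial Real

lemma polyUpper (P : Polynomial ℂ) (k : ℕ) (hk : P.natDegree ≤ k) :
    ∃ Cp : ℝ, 1 ≤ Cp ∧ ∀ y : ℂ, ‖P.eval y‖ ≤ Cp * (max ‖y‖ 1)^k := by
  have hs : (0:ℝ) ≤ ∑ i ∈ Finset.range (P.natDegree+1), ‖P.coeff i‖ :=
    Finset.sum_nonneg fun i _ => norm_nonneg _
  refine ⟨(∑ i ∈ Finset.range (P.natDegree+1), ‖P.coeff i‖) + 1, by linarith, fun y => ?_⟩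
  have hM : (1:ℝ) ≤ max ‖y‖ 1 := le_max_right _ _
  have h1 : ‖P.eval y‖ ≤ ∑ i ∈ Finset.range (P.natDegree+1), ‖P.coeff i‖ * (max ‖y‖ 1)^k := by
    rw [Polynomial.eval_eq_sum_range]
    refine (norm_sum_le _ _).trans (Finset.sum_le_sum fun i hi => ?_)
    rw [norm_mul, norm_pow]
    refine mul_le_mul_of_nonneg_left ?_ (norm_nonneg _)
    have hik : i ≤ k := by have := Finset.mem_range.1 hi; omega
    calc ‖y‖^i ≤ (max ‖y‖ 1)^i := pow_le_pow_left₀ (norm_nonneg _) (le_max_left _ _) i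
      _ ≤ (max ‖y‖ 1)^k := pow_le_pow_right₀ hM hik
  rw [← Finset.sum_mul] at h1
  refine h1.trans ?_
  have h2 : (0:ℝ) < (max ‖y‖ 1)^k := by positivity
  nlinarith

lemma polyLower (P : Polynomial ℂ) (hm : 2 ≤ P.natDegree) :
    ∃ Rp : ℝ, 1 ≤ Rp ∧ ∀ y : ℂ, Rp ≤ ‖y‖ →
      (‖P.leadingCoeff‖/2) * ‖y‖^P.natDegree ≤ ‖P.eval y‖ := by
  have hP0 : P ≠ 0 := fun h => by simp [h] at hm
  have hlc : (0:ℝ) < ‖P.leadingCoeff‖ := by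
    simpa using (norm_pos_iff).2 (Polynomial.leadingCoeff_ne_zero.2 hP0)
  set lc := ‖P.leadingCoeff‖
  obtain ⟨Cq, hCq1, hCq⟩ := polyUpper P.eraseLead (P.natDegree - 1)
    (Polynomial.eraseLead_natDegree_le P)
  refine ⟨max 1 (2*Cq/lc), le_max_left _ _, fun y hy => ?_⟩
  have hy1 : (1:ℝ) ≤ ‖y‖ := le_trans (le_max_left _ _) hy
  have hy2 : 2*Cq/lc ≤ ‖y‖ := le_trans (le_max_right _ _) hy
  have hmax : max ‖y‖ 1 = ‖y‖ := max_eq_left hy1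
  have heval : P.eval y = P.eraseLead.eval y + P.leadingCoeff * y ^ P.natDegree := by
    conv_lhs => rw [← P.eraseLead_add_C_mul_X_pow]
    rw [Polynomial.eval_add, Polynomial.eval_mul, Polynomial.eval_C, Polynomial.eval_pow, Polynomial.eval_X]
  have hQ : ‖P.eraseLead.eval y‖ ≤ Cq * ‖y‖^(P.natDegree - 1) := by
    have := hCq y; rwa [hmax] at this
  have hpow : ‖y‖^P.natDegree = ‖y‖^(P.natDegree-1) * ‖y‖ := by
    rw [← pow_succ]; congr 1; omega
  have hQ2 : ‖P.eraseLead.eval y‖ ≤ (lc/2) * ‖y‖^P.natDegree := by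
    refine hQ.trans ?_
    rw [hpow]
    have hyn : (0:ℝ) ≤ ‖y‖^(P.natDegree-1) := by positivity
    rw [div_le_iff₀ hlc] at hy2
    nlinarith [mul_nonneg (by linarith : (0:ℝ) ≤ ‖y‖*lc - 2*Cq) hyn]
  have hlead : ‖P.leadingCoeff * y ^ P.natDegree‖ = lc * ‖y‖^P.natDegree := by
    rw [norm_mul, norm_pow]
  have htri : ‖P.leadingCoeff * y ^ P.natDegree‖ ≤ ‖P.eval y‖ + ‖P.eraseLead.eval y‖ := by
    have h3 : ‖(P.eraseLead.eval y + P.leadingCoeff * y ^ P.natDegree) - P.eraseLead.eval y‖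
        ≤ ‖P.eraseLead.eval y + P.leadingCoeff * y ^ P.natDegree‖ + ‖P.eraseLead.eval y‖ :=
      norm_sub_le _ _
    rw [add_sub_cancel_left, ← heval] at h3
    exact h3
  rw [hlead] at htri
  linarith


def inV (R : ℝ) (p : ℂ × ℂ) : Prop := R ≤ ‖p.2‖ ∧ ‖p.1‖ ≤ ‖p.2‖

def GoodC (c : ℂ × Polynomial ℂ) (Cc Rc : ℝ) : Prop :=
  (∀ p : ℂ × ℂ, Real.log (max ‖genHenonMap c p‖ 1)
      ≤ c.2.natDegree * Real.log (max ‖p‖ 1) + Cc) ∧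
  (∀ R, Rc ≤ R → ∀ p : ℂ × ℂ, inV R p → inV R (genHenonMap c p) ∧
      c.2.natDegree * Real.log ‖p.2‖ - Cc ≤ Real.log ‖(genHenonMap c p).2‖) ∧
  (∀ R, Rc ≤ R → ∃ A, 1 ≤ A ∧ ∀ q : ℂ × ℂ, ¬ inV R (genHenonMap c q) →
      ‖genHenonMap c q‖ ≤ A * max (Real.sqrt ‖q‖) 1)

set_option maxHeartbeats 1000000 in
theorem exists_goodC' (a : ℂ) (P : Polynomial ℂ) (ha : a ≠ 0) (hm : 2 ≤ P.natDegree) :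
    ∃ Cc Rc : ℝ, 0 ≤ Cc ∧ 1 ≤ Rc ∧ GoodC (a, P) Cc Rc := by
  set c : ℂ × Polynomial ℂ := (a, P) with hc
  have hc1 : c.1 = a := rfl
  have hc2 : c.2 = P := rfl
  set m := P.natDegree with hm'
  have hP0 : P ≠ 0 := by intro h; rw [h] at hm'; simp [hm'] at hm
  have hlc : (0:ℝ) < ‖P.leadingCoeff‖ := by
    simpa using (norm_pos_iff).2 (Polynomial.leadingCoeff_ne_zero.2 hP0)
  set lc := ‖P.leadingCoeff‖ with hlc'
  obtain ⟨Cp, hCp1, hCp⟩ := polyUpper P m le_rfl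
  obtain ⟨Rp, hRp1, hRp⟩ := polyLower P hm
  set ma := max 1 ‖a‖ with hma'
  have hma1 : (1:ℝ) ≤ ma := le_max_left _ _
  set Rc := max Rp (4 * ma / lc) with hRc'
  have hRc1 : (1:ℝ) ≤ Rc := le_trans hRp1 (le_max_left _ _)
  set Cc := max (Real.log (‖a‖ + 1 + Cp)) (max 0 (-Real.log (lc/4))) with hCc'
  have hCc0 : 0 ≤ Cc := le_trans (le_max_left _ _) (le_max_right _ _)
  -- the key elementary estimate on the region ‖y‖ ≥ Rc
  have hkey : ∀ y : ℂ, Rc ≤ ‖y‖ → ‖y‖ * ma ≤ (lc/4) * ‖y‖^m := by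
    intro y hy
    have hy1 : (1:ℝ) ≤ ‖y‖ := le_trans hRc1 hy
    have h2 : ‖y‖^2 ≤ ‖y‖^m := pow_le_pow_right₀ hy1 hm
    have h3 : 4 * ma / lc ≤ ‖y‖ := le_trans (le_max_right _ _) hy
    rw [div_le_iff₀ hlc] at h3
    nlinarith [norm_nonneg y]
  refine ⟨Cc, Rc, hCc0, hRc1, ?_, ?_, ?_⟩
  · -- (i) global upper bound
    intro p
    rw [hc2, ← hm']
    set t := max ‖p‖ 1 with ht'
    have ht1 : (1:ℝ) ≤ t := le_max_right _ _
    have ht0 : (0:ℝ) < t := lt_of_lt_of_le one_pos ht1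
    have hx : ‖p.1‖ ≤ t := le_trans (norm_fst_le p) (le_max_left _ _)
    have hy : ‖p.2‖ ≤ t := le_trans (norm_snd_le p) (le_max_left _ _)
    have htm : t ≤ t^m := le_self_pow₀ ht1 (by omega)
    have htm1 : (1:ℝ) ≤ t^m := one_le_pow₀ ht1
    have hCp' : ‖P.eval p.2‖ ≤ Cp * t^m := by
      refine (hCp p.2).trans ?_
      refine mul_le_mul_of_nonneg_left ?_ (by linarith)
      exact pow_le_pow_left₀ (le_trans zero_le_one (le_max_right _ _)) (max_le hy ht1) m
    have hb : ‖genHenonMap c p‖ ≤ (‖a‖ + 1 + Cp) * t^m := by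
      rw [genHenonMap, Prod.norm_def]
      have h1 : ‖a * p.2‖ ≤ (‖a‖ + 1 + Cp) * t^m := by
        rw [norm_mul]
        have : ‖a‖ * ‖p.2‖ ≤ ‖a‖ * t^m :=
          mul_le_mul_of_nonneg_left (le_trans hy htm) (norm_nonneg a)
        nlinarith [pow_pos ht0 m]
      have h2 : ‖p.1 + P.eval p.2‖ ≤ (‖a‖ + 1 + Cp) * t^m := by
        refine (norm_add_le _ _).trans ?_
        have := le_trans hx htm
        nlinarith [pow_pos ht0 m, norm_nonneg a]
      exact max_le h1 h2
    have hC' : (1:ℝ) ≤ (‖a‖ + 1 + Cp) := by nlinarith [norm_nonneg a]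
    have hpos : (0:ℝ) < (‖a‖ + 1 + Cp) * t^m := by positivity
    have : Real.log (max ‖genHenonMap c p‖ 1) ≤ Real.log ((‖a‖ + 1 + Cp) * t^m) := by
      refine Real.log_le_log (by positivity) (max_le hb ?_)
      nlinarith
    refine this.trans ?_
    rw [Real.log_mul (by positivity) (by positivity), Real.log_pow]
    have h5 : Real.log (‖a‖ + 1 + Cp) ≤ Cc := le_max_left _ _
    linarith
  · -- (ii) expansion on V
    intro R hR p hp
    rw [hc2, ← hm']
    obtain ⟨hp1, hp2⟩ := hp
    set y := p.2 with hy'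
    have hyRc : Rc ≤ ‖y‖ := le_trans hR hp1
    have hy1 : (1:ℝ) ≤ ‖y‖ := le_trans hRc1 hyRc
    have hPy : (lc/2) * ‖y‖^m ≤ ‖P.eval y‖ := hRp y (le_trans (le_max_left _ _) hyRc)
    have hk := hkey y hyRc
    have hyma : ‖y‖ ≤ ‖y‖ * ma := le_mul_of_one_le_right (norm_nonneg y) hma1
    have htri : ‖P.eval y‖ ≤ ‖p.1 + P.eval y‖ + ‖p.1‖ := by
      have h := norm_sub_le (p.1 + P.eval y) p.1
      rwa [add_sub_cancel_left] at h
    have h2 : (lc/4) * ‖y‖^m ≤ ‖p.1 + P.eval y‖ := by linarith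
    have hsnd : (genHenonMap c p).2 = p.1 + P.eval y := rfl
    have hfst : (genHenonMap c p).1 = a * y := rfl
    have hpos4 : (0:ℝ) < (lc/4) * ‖y‖^m := by positivity
    constructor
    · refine ⟨?_, ?_⟩
      · rw [hsnd]; calc R ≤ ‖y‖ := hp1
          _ ≤ ‖y‖ * ma := hyma
          _ ≤ (lc/4) * ‖y‖^m := hk
          _ ≤ _ := h2
      · rw [hsnd, hfst, norm_mul]
        calc ‖a‖ * ‖y‖ ≤ ma * ‖y‖ := mul_le_mul_of_nonneg_right (le_max_right _ _) (norm_nonneg y)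
          _ = ‖y‖ * ma := mul_comm _ _
          _ ≤ (lc/4) * ‖y‖^m := hk
          _ ≤ _ := h2
    · rw [hsnd]
      have hlog : Real.log ((lc/4) * ‖y‖^m) ≤ Real.log ‖p.1 + P.eval y‖ :=
        Real.log_le_log hpos4 h2
      rw [Real.log_mul (by positivity) (by positivity), Real.log_pow] at hlog
      have h6 : -Cc ≤ Real.log (lc/4) := by
        have : -Real.log (lc/4) ≤ Cc := le_trans (le_max_right _ _) (le_max_right _ _)
        linarith
      linarith
  · -- (iii) bound off the image of V
    intro R hR
    have hR1 : (1:ℝ) ≤ R := le_trans hRc1 hR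
    have hR0 : (0:ℝ) ≤ R := le_trans zero_le_one hR1
    have hsq0 : (0:ℝ) ≤ ‖a‖ * Real.sqrt (4/lc) :=
      mul_nonneg (norm_nonneg a) (Real.sqrt_nonneg _)
    have hRa0 : (0:ℝ) ≤ R * (1 + ‖a‖) := by nlinarith [norm_nonneg a]
    refine ⟨R * (1 + ‖a‖) + ‖a‖ * Real.sqrt (4/lc) + 1, by linarith, fun q hnv => ?_⟩
    set A := R * (1 + ‖a‖) + ‖a‖ * Real.sqrt (4/lc) + 1 with hA'
    have hA1 : (1:ℝ) ≤ A := by rw [hA']; linarith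
    set y := q.2 with hy'
    have hsnd : (genHenonMap c q).2 = q.1 + P.eval y := rfl
    have hfst : (genHenonMap c q).1 = a * y := rfl
    have hmx1 : (1:ℝ) ≤ max (Real.sqrt ‖q‖) 1 := le_max_right _ _
    have hAmax : A ≤ A * max (Real.sqrt ‖q‖) 1 :=
      le_mul_of_one_le_right (by linarith) hmx1
    rw [inV, hsnd, hfst, not_and_or, not_le, not_le] at hnv
    have h1 : ‖q.1 + P.eval y‖ ≤ max R (‖a‖ * ‖y‖) := by
      rcases hnv with h | h
      · exact le_trans (le_of_lt h) (le_max_left _ _)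
      · rw [norm_mul] at h; exact le_trans (le_of_lt h) (le_max_right _ _)
    have hhq : ‖genHenonMap c q‖ ≤ max R (‖a‖ * ‖y‖) := by
      rw [Prod.norm_def, hsnd, hfst, norm_mul]
      exact max_le (le_max_right _ _) h1
    by_cases hyR : ‖y‖ ≤ R
    · refine hhq.trans ((max_le ?_ ?_).trans hAmax)
      · rw [hA']; nlinarith [mul_nonneg hR0 (norm_nonneg a)]
      · have : ‖a‖ * ‖y‖ ≤ ‖a‖ * R := mul_le_mul_of_nonneg_left hyR (norm_nonneg a)
        rw [hA']; nlinarith [mul_nonneg hR0 (norm_nonneg a)]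
    · push_neg at hyR
      have hyRc : Rc ≤ ‖y‖ := le_trans hR (le_of_lt hyR)
      have hy1 : (1:ℝ) ≤ ‖y‖ := le_trans hRc1 hyRc
      have hPy : (lc/2) * ‖y‖^m ≤ ‖P.eval y‖ := hRp y (le_trans (le_max_left _ _) hyRc)
      have hk := hkey y hyRc
      have hmaxy : max R (‖a‖ * ‖y‖) ≤ ‖y‖ * ma := by
        refine max_le ?_ ?_
        · calc R ≤ ‖y‖ := le_of_lt hyR
            _ ≤ ‖y‖ * ma := le_mul_of_one_le_right (norm_nonneg y) hma1
        · calc ‖a‖ * ‖y‖ ≤ ma * ‖y‖ := mul_le_mul_of_nonneg_right (le_max_right _ _) (norm_nonneg y)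
            _ = ‖y‖ * ma := mul_comm _ _
      have htri : ‖P.eval y‖ ≤ ‖q.1 + P.eval y‖ + ‖q.1‖ := by
        have h := norm_sub_le (q.1 + P.eval y) q.1
        rwa [add_sub_cancel_left] at h
      have hx : (lc/4) * ‖y‖^m ≤ ‖q.1‖ := by
        have := le_trans h1 hmaxy
        linarith
      have hy2m : ‖y‖^2 ≤ ‖y‖^m := pow_le_pow_right₀ hy1 hm
      have hq1 : ‖q.1‖ ≤ ‖q‖ := norm_fst_le q
      have hysq : ‖y‖^2 ≤ (4/lc) * ‖q‖ := by
        have h5 : lc * ‖y‖^2 ≤ lc * ‖y‖^m := mul_le_mul_of_nonneg_left hy2m (le_of_lt hlc)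
        rw [div_mul_eq_mul_div, le_div_iff₀ hlc]
        linarith
      have hyle : ‖y‖ ≤ Real.sqrt (4/lc) * Real.sqrt ‖q‖ := by
        rw [← Real.sqrt_mul (by positivity) ‖q‖]
        calc ‖y‖ = Real.sqrt (‖y‖^2) := (Real.sqrt_sq (norm_nonneg y)).symm
          _ ≤ Real.sqrt ((4/lc) * ‖q‖) := Real.sqrt_le_sqrt hysq
      refine hhq.trans (max_le ?_ ?_)
      · refine le_trans ?_ hAmax
        rw [hA']; nlinarith [mul_nonneg hR0 (norm_nonneg a)]
      · calc ‖a‖ * ‖y‖ ≤ ‖a‖ * (Real.sqrt (4/lc) * Real.sqrt ‖q‖) :=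
            mul_le_mul_of_nonneg_left hyle (norm_nonneg a)
          _ = (‖a‖ * Real.sqrt (4/lc)) * Real.sqrt ‖q‖ := by ring
          _ ≤ A * max (Real.sqrt ‖q‖) 1 := by
              refine mul_le_mul ?_ (le_max_left _ _) (Real.sqrt_nonneg _) (by linarith)
              rw [hA']; linarith

theorem exists_goodC (c : ℂ × Polynomial ℂ) (ha : c.1 ≠ 0) (hm : 2 ≤ c.2.natDegree) :
    ∃ Cc Rc : ℝ, 0 ≤ Cc ∧ 1 ≤ Rc ∧ GoodC c Cc Rc := by
  obtain ⟨a, P⟩ := c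
  exact exists_goodC' a P ha hm

lemma GoodC.mono {c : ℂ × Polynomial ℂ} {C R C' R' : ℝ} (h : GoodC c C R)
    (hC : C ≤ C') (hR : R ≤ R') : GoodC c C' R' := by
  obtain ⟨h1, h2, h3⟩ := h
  refine ⟨fun p => le_trans (h1 p) (by linarith), fun R'' hR'' p hp => ?_, fun R'' hR'' => h3 R'' (le_trans hR hR'')⟩
  obtain ⟨ha, hb⟩ := h2 R'' (le_trans hR hR'') p hp
  exact ⟨ha, by linarith⟩

lemma exists_goodC_list (L : List (ℂ × Polynomial ℂ))
    (h : ∀ c ∈ L, c.1 ≠ 0 ∧ 2 ≤ c.2.natDegree) :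
    ∃ K R₀ : ℝ, 0 ≤ K ∧ 1 ≤ R₀ ∧ ∀ c ∈ L, GoodC c K R₀ := by
  induction L with
  | nil => exact ⟨0, 1, le_rfl, le_rfl, by simp⟩
  | cons c L ih =>
    obtain ⟨K, R₀, hK, hR₀, hall⟩ := ih (fun c' hc' => h c' (List.mem_cons_of_mem _ hc'))
    obtain ⟨Cc, Rc, hCc, hRc, hg⟩ := exists_goodC c (h c List.mem_cons_self).1
      (h c List.mem_cons_self).2
    refine ⟨max K Cc, max R₀ Rc, le_trans hK (le_max_left _ _), le_trans hR₀ (le_max_left _ _),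
      fun c' hc' => ?_⟩
    rcases List.mem_cons.1 hc' with h1 | h1
    · subst h1; exact hg.mono (le_max_right _ _) (le_max_right _ _)
    · exact (hall c' h1).mono (le_max_left _ _) (le_max_left _ _)

def FF (M : List (ℂ × Polynomial ℂ)) : ℂ × ℂ → ℂ × ℂ := (M.map genHenonMap).foldr (· ∘ ·) id

def DD (M : List (ℂ × Polynomial ℂ)) : ℕ := (M.map fun c => c.2.natDegree).prod

lemma FF_cons (c : ℂ × Polynomial ℂ) (M : List (ℂ × Polynomial ℂ)) (p : ℂ × ℂ) :
    FF (c :: M) p = genHenonMap c (FF M p) := rfl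

lemma DD_cons (c : ℂ × Polynomial ℂ) (M : List (ℂ × Polynomial ℂ)) :
    DD (c :: M) = c.2.natDegree * DD M := by simp [DD]

lemma FF_continuous (M : List (ℂ × Polynomial ℂ)) : Continuous (FF M) := by
  induction M with
  | nil => exact continuous_id
  | cons c M ih =>
    have : FF (c :: M) = genHenonMap c ∘ FF M := rfl
    rw [this]
    refine Continuous.comp ?_ ih
    exact (continuous_const.mul continuous_snd).prodMk
      (continuous_fst.add (c.2.continuous.comp continuous_snd))

lemma comp_upper (K R₀ : ℝ) (hK : 0 ≤ K) (M : List (ℂ × Polynomial ℂ))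
    (h : ∀ c ∈ M, 2 ≤ c.2.natDegree ∧ GoodC c K R₀) :
    ∃ C : ℝ, 0 ≤ C ∧ ∀ p : ℂ × ℂ,
      Real.log (max ‖FF M p‖ 1) ≤ (DD M : ℝ) * Real.log (max ‖p‖ 1) + C := by
  induction M with
  | nil => exact ⟨0, le_rfl, fun p => by simp [FF, DD]⟩
  | cons c M ih =>
    obtain ⟨C', hC', hup⟩ := ih (fun c' hc' => h c' (List.mem_cons_of_mem _ hc'))
    obtain ⟨h1, -, -⟩ := (h c List.mem_cons_self).2
    refine ⟨(c.2.natDegree : ℝ) * C' + K, by positivity, fun p => ?_⟩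
    have h2 := h1 (FF M p)
    rw [← FF_cons] at h2
    refine h2.trans ?_
    have h3 := hup p
    have h4 : (c.2.natDegree:ℝ) * Real.log (max ‖FF M p‖ 1)
        ≤ (c.2.natDegree:ℝ) * ((DD M : ℝ) * Real.log (max ‖p‖ 1) + C') :=
      mul_le_mul_of_nonneg_left h3 (by positivity)
    rw [DD_cons]
    push_cast
    nlinarith

lemma comp_expand (K R₀ : ℝ) (hK : 0 ≤ K) (hR₀ : Real.exp K ≤ R₀)
    (M : List (ℂ × Polynomial ℂ))
    (h : ∀ c ∈ M, 2 ≤ c.2.natDegree ∧ GoodC c K R₀) :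
    ∀ p : ℂ × ℂ, inV R₀ p → inV R₀ (FF M p) ∧
      (DD M : ℝ) * (Real.log ‖p.2‖ - K) ≤ Real.log ‖(FF M p).2‖ - K := by
  have haux : ∀ q : ℂ × ℂ, inV R₀ q → 0 ≤ Real.log ‖q.2‖ - K := by
    intro q hq
    have h1 : Real.exp K ≤ ‖q.2‖ := le_trans hR₀ hq.1
    have h2 : Real.log (Real.exp K) ≤ Real.log ‖q.2‖ :=
      Real.log_le_log (Real.exp_pos K) h1
    rw [Real.log_exp] at h2
    linarith
  induction M with
  | nil => intro p hp; exact ⟨hp, by simp [FF, DD]⟩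
  | cons c M ih =>
    intro p hp
    obtain ⟨hV, hψ⟩ := ih (fun c' hc' => h c' (List.mem_cons_of_mem _ hc')) p hp
    obtain ⟨hdeg, ⟨-, h2, -⟩⟩ := h c List.mem_cons_self
    obtain ⟨hV', hlog⟩ := h2 R₀ le_rfl (FF M p) hV
    rw [← FF_cons] at hV' hlog
    refine ⟨hV', ?_⟩
    have hψ0 : 0 ≤ Real.log ‖(FF M p).2‖ - K := haux _ hV
    have h5 : (c.2.natDegree:ℝ) * ((DD M : ℝ) * (Real.log ‖p.2‖ - K))
        ≤ (c.2.natDegree:ℝ) * (Real.log ‖(FF M p).2‖ - K) :=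
      mul_le_mul_of_nonneg_left hψ (by positivity)
    have hm2 : (2:ℝ) ≤ (c.2.natDegree:ℝ) := by exact_mod_cast hdeg
    rw [DD_cons]
    push_cast
    nlinarith

lemma sqrt_le_self' {a : ℝ} (h : 1 ≤ a) : Real.sqrt a ≤ a := by
  have h0 : (0:ℝ) ≤ a := by linarith
  calc Real.sqrt a ≤ Real.sqrt (a^2) := Real.sqrt_le_sqrt (by nlinarith)
    _ = a := Real.sqrt_sq h0

lemma comp_offV (K R₀ : ℝ) (M : List (ℂ × Polynomial ℂ)) (hM : M ≠ [])
    (h : ∀ c ∈ M, 2 ≤ c.2.natDegree ∧ GoodC c K R₀) :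
    ∃ A : ℝ, 1 ≤ A ∧ ∀ p : ℂ × ℂ, ¬ inV R₀ (FF M p) →
      ‖FF M p‖ ≤ A * max (Real.sqrt ‖p‖) 1 := by
  induction M with
  | nil => exact absurd rfl hM
  | cons c M ih =>
    obtain ⟨-, -, h3⟩ := (h c List.mem_cons_self).2
    obtain ⟨Ac, hAc, hc3⟩ := h3 R₀ le_rfl
    rcases List.eq_nil_or_concat' M with rfl | hM'
    · exact ⟨Ac, hAc, fun p hp => hc3 p hp⟩
    · have hMne : M ≠ [] := by rintro rfl; obtain ⟨_, _, h⟩ := hM'; simp at h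
      obtain ⟨A', hA', hoff⟩ := ih hMne (fun c' hc' => h c' (List.mem_cons_of_mem _ hc'))
      refine ⟨Ac * A', one_le_mul_of_one_le_of_one_le hAc hA', fun p hp => ?_⟩
      by_cases hq : inV R₀ (FF M p)
      · obtain ⟨-, ⟨-, h2, -⟩⟩ := h c List.mem_cons_self
        obtain ⟨hV', -⟩ := h2 R₀ le_rfl (FF M p) hq
        rw [← FF_cons] at hV'
        exact absurd hV' hp
      · have hb := hoff p hq
        have hb2 := hc3 (FF M p) (by rw [FF_cons] at hp; exact hp)
        rw [← FF_cons] at hb2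
        refine hb2.trans ?_
        have hmx1 : (1:ℝ) ≤ max (Real.sqrt ‖p‖) 1 := le_max_right _ _
        have hA'max : (1:ℝ) ≤ A' * max (Real.sqrt ‖p‖) 1 :=
          one_le_mul_of_one_le_of_one_le hA' hmx1
        have hs : Real.sqrt ‖FF M p‖ ≤ A' * max (Real.sqrt ‖p‖) 1 := by
          calc Real.sqrt ‖FF M p‖ ≤ Real.sqrt (A' * max (Real.sqrt ‖p‖) 1) :=
              Real.sqrt_le_sqrt hb
            _ ≤ A' * max (Real.sqrt ‖p‖) 1 := sqrt_le_self' hA'max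
        have h6 : max (Real.sqrt ‖FF M p‖) 1 ≤ A' * max (Real.sqrt ‖p‖) 1 :=
          max_le hs hA'max
        calc Ac * max (Real.sqrt ‖FF M p‖) 1 ≤ Ac * (A' * max (Real.sqrt ‖p‖) 1) :=
            mul_le_mul_of_nonneg_left h6 (by linarith)
          _ = Ac * A' * max (Real.sqrt ‖p‖) 1 := by ring

end S13

open S13 Filter in
set_option maxHeartbeats 4000000 in
/-- the Green function `G⁺` of a composition of generalized Hénon maps. -/
theorem statement13 (f : ℂ × ℂ → ℂ × ℂ)
    (L : List (ℂ × Polynomial ℂ)) (hL : L ≠ [])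
    (hcoef : ∀ c ∈ L, c.1 ≠ 0 ∧ 2 ≤ c.2.natDegree)
    (hf : f = (L.map genHenonMap).foldr (· ∘ ·) id)
    (d : ℕ) (hd : d = (L.map fun c => c.2.natDegree).prod) (hd2 : 2 ≤ d) :
    ∃ G : ℂ × ℂ → ℝ, Continuous G ∧ (∀ p, 0 ≤ G p) ∧
      (∀ B : Set (ℂ × ℂ), Bornology.IsBounded B →
        TendstoUniformlyOn (fun (n : ℕ) (p : ℂ × ℂ) =>
          ((d : ℝ) ^ n)⁻¹ * Real.log (max ‖f^[n] p‖ 1)) G Filter.atTop B) ∧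
      (∀ p, G (f p) = d * G p) ∧
      (∃ Mb : ℝ, ∀ p, G p - Real.log (max ‖p‖ 1) ≤ Mb) ∧
      (∀ p, G p = 0 ↔ ∃ R : ℝ, ∀ n : ℕ, ‖f^[n] p‖ ≤ R) := by
  classical
  obtain ⟨K, R₁, hK, hR₁, hgoodK⟩ := S13.exists_goodC_list L hcoef
  set R₀ : ℝ := max R₁ (Real.exp (K+1)) with hR₀'
  have hR₀1 : (1:ℝ) ≤ R₀ := le_trans hR₁ (le_max_left _ _)
  have hR₀0 : (0:ℝ) < R₀ := lt_of_lt_of_le one_pos hR₀1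
  have hexpK : Real.exp K ≤ R₀ :=
    le_trans (Real.exp_le_exp.2 (by linarith)) (le_max_right _ _)
  have hlogR₀ : K + 1 ≤ Real.log R₀ := by
    have h := Real.log_le_log (Real.exp_pos _) (le_max_right R₁ (Real.exp (K+1)))
    rwa [Real.log_exp] at h
  have hgood' : ∀ c ∈ L, 2 ≤ c.2.natDegree ∧ S13.GoodC c K R₀ :=
    fun c hc => ⟨(hcoef c hc).2, (hgoodK c hc).mono le_rfl (le_max_left _ _)⟩
  obtain ⟨C, hC0, hup⟩ := S13.comp_upper K R₀ hK L hgood'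
  have hexpand := S13.comp_expand K R₀ hK hexpK L hgood'
  obtain ⟨A, hA1, hoff⟩ := S13.comp_offV K R₀ L hL hgood'
  have hfF : f = S13.FF L := hf
  rw [← hfF] at hup hexpand hoff
  have hDd : S13.DD L = d := hd.symm
  rw [hDd] at hup hexpand
  -- basic numeric facts
  have hd2' : (2:ℝ) ≤ (d:ℝ) := by exact_mod_cast hd2
  have hd1 : (1:ℝ) < (d:ℝ) := by linarith
  have hd0 : (0:ℝ) < (d:ℝ) := by linarith
  have hepos : ∀ n : ℕ, (0:ℝ) < ((d:ℝ)^n)⁻¹ := fun n => by positivity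
  have hinv_succ : ∀ n : ℕ, ((d:ℝ)^(n+1))⁻¹ * (d:ℝ) = ((d:ℝ)^n)⁻¹ := by
    intro n; rw [pow_succ, mul_inv]; field_simp
  have he_add : ∀ m k : ℕ, ((d:ℝ)^(m+k))⁻¹ = ((d:ℝ)^m)⁻¹ * ((d:ℝ)^k)⁻¹ := by
    intro m k; rw [pow_add, mul_inv]
  have he_le_one : ∀ k : ℕ, ((d:ℝ)^k)⁻¹ ≤ 1 := by
    intro k
    rw [inv_le_one_iff₀]
    right; exact one_le_pow₀ (by linarith)
  have h2e : ∀ k : ℕ, 2*((d:ℝ)^(k+1))⁻¹ ≤ ((d:ℝ)^k)⁻¹ := by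
    intro k
    have h2b : (d:ℝ)⁻¹*2 ≤ 1 := by
      have h := mul_le_mul_of_nonneg_left hd2' (le_of_lt (inv_pos.2 hd0))
      rwa [inv_mul_cancel₀ (ne_of_gt hd0)] at h
    rw [pow_succ, mul_inv]
    nlinarith [hepos k]
  have hlogphi0 : ∀ q : ℂ × ℂ, 0 ≤ Real.log (max ‖q‖ 1) :=
    fun q => Real.log_nonneg (le_max_right _ _)
  set Gs : ℕ → (ℂ × ℂ) → ℝ :=
    fun n p => ((d:ℝ)^n)⁻¹ * Real.log (max ‖f^[n] p‖ 1) with hGs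
  have hGs0 : ∀ n p, 0 ≤ Gs n p :=
    fun n p => mul_nonneg (le_of_lt (hepos n)) (hlogphi0 _)
  -- one-step upper estimate
  have hstep_up : ∀ (n : ℕ) (p : ℂ × ℂ), Gs (n+1) p ≤ Gs n p + C * ((d:ℝ)^(n+1))⁻¹ := by
    intro n p
    have h1 := hup (f^[n] p)
    rw [← Function.iterate_succ_apply' f n p] at h1
    have h2 : ((d:ℝ)^(n+1))⁻¹ * Real.log (max ‖f^[n+1] p‖ 1)
        ≤ ((d:ℝ)^(n+1))⁻¹ * ((d:ℝ) * Real.log (max ‖f^[n] p‖ 1) + C) :=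
      mul_le_mul_of_nonneg_left h1 (le_of_lt (hepos (n+1)))
    have h3 : ((d:ℝ)^(n+1))⁻¹ * ((d:ℝ) * Real.log (max ‖f^[n] p‖ 1) + C)
        = ((d:ℝ)^n)⁻¹ * Real.log (max ‖f^[n] p‖ 1) + C * ((d:ℝ)^(n+1))⁻¹ := by
      rw [mul_add, ← mul_assoc, hinv_succ n]; ring
    simp only [hGs]
    rw [← h3]; exact h2
  -- telescoped upper estimate
  have hup_tail : ∀ (p : ℂ × ℂ) (m k : ℕ),
      Gs (m+k) p ≤ Gs m p + C * ((d:ℝ)^m)⁻¹ * (1 - ((d:ℝ)^k)⁻¹) := by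
    intro p m k
    induction k with
    | zero => simp
    | succ k ih =>
      have h1 : m + (k+1) = (m+k) + 1 := by omega
      rw [h1]
      refine (hstep_up (m+k) p).trans ?_
      have h2 := h2e k
      have h3 : ((d:ℝ)^(m+k+1))⁻¹ = ((d:ℝ)^m)⁻¹ * ((d:ℝ)^(k+1))⁻¹ := he_add m (k+1)
      have h4 : 0 ≤ C * ((d:ℝ)^m)⁻¹ := mul_nonneg hC0 (le_of_lt (hepos m))
      have h5 : 0 ≤ ((d:ℝ)^m)⁻¹ := le_of_lt (hepos m)
      nlinarith [mul_nonneg (mul_nonneg hC0 h5) (by linarith : (0:ℝ) ≤ ((d:ℝ)^k)⁻¹ - 2*((d:ℝ)^(k+1))⁻¹)]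
  -- invariance of V and expansion along the orbit
  have hinvIter : ∀ q : ℂ × ℂ, inV R₀ q → ∀ k : ℕ, inV R₀ (f^[k] q) := by
    intro q hq k
    induction k with
    | zero => simpa using hq
    | succ k ih => rw [Function.iterate_succ_apply']; exact (hexpand _ ih).1
  have hψiter : ∀ q : ℂ × ℂ, inV R₀ q → ∀ k : ℕ,
      ((d:ℝ)^k) * (Real.log ‖q.2‖ - K) ≤ Real.log ‖(f^[k] q).2‖ - K := by
    intro q hq k
    induction k with
    | zero => simp
    | succ k ih =>
      have h1 := (hexpand (f^[k] q) (hinvIter q hq k)).2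
      rw [← Function.iterate_succ_apply' f k q] at h1
      have h2 : (d:ℝ)*((d:ℝ)^k*(Real.log ‖q.2‖ - K)) ≤ (d:ℝ)*(Real.log ‖(f^[k] q).2‖ - K) :=
        mul_le_mul_of_nonneg_left ih (by linarith)
      calc ((d:ℝ)^(k+1)) * (Real.log ‖q.2‖ - K)
          = (d:ℝ)*((d:ℝ)^k*(Real.log ‖q.2‖ - K)) := by ring
        _ ≤ (d:ℝ)*(Real.log ‖(f^[k] q).2‖ - K) := h2
        _ ≤ Real.log ‖(f^[k+1] q).2‖ - K := h1
  have hψ1 : ∀ q : ℂ × ℂ, inV R₀ q → 1 ≤ Real.log ‖q.2‖ - K := by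
    intro q hq
    have h1 : Real.log R₀ ≤ Real.log ‖q.2‖ := Real.log_le_log hR₀0 hq.1
    linarith
  have hφeq : ∀ q : ℂ × ℂ, inV R₀ q → Real.log (max ‖q‖ 1) = Real.log ‖q.2‖ := by
    intro q hq
    have h1 : ‖q‖ = ‖q.2‖ := by rw [Prod.norm_def]; exact max_eq_right hq.2
    have h2 : (1:ℝ) ≤ ‖q‖ := by rw [h1]; exact le_trans hR₀1 hq.1
    rw [max_eq_left h2, h1]
  -- one-step lower estimate on V
  have hstep_down : ∀ (n : ℕ) (p : ℂ × ℂ), inV R₀ (f^[n] p) →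
      Gs n p - ((d:ℝ)*K) * ((d:ℝ)^(n+1))⁻¹ ≤ Gs (n+1) p := by
    intro n p hq
    have h1 := (hexpand (f^[n] p) hq).2
    have hVn1 : inV R₀ (f (f^[n] p)) := (hexpand (f^[n] p) hq).1
    have h2 : (d:ℝ) * Real.log ‖(f^[n] p).2‖ - (d:ℝ)*K ≤ Real.log ‖(f (f^[n] p)).2‖ := by
      nlinarith
    rw [← Function.iterate_succ_apply' f n p] at h2 hVn1
    have h3 : Real.log (max ‖f^[n+1] p‖ 1) = Real.log ‖(f^[n+1] p).2‖ := hφeq _ hVn1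
    have h4 : Real.log (max ‖f^[n] p‖ 1) = Real.log ‖(f^[n] p).2‖ := hφeq _ hq
    have h5 : ((d:ℝ)^(n+1))⁻¹ * ((d:ℝ) * Real.log ‖(f^[n] p).2‖ - (d:ℝ)*K)
        ≤ ((d:ℝ)^(n+1))⁻¹ * Real.log ‖(f^[n+1] p).2‖ :=
      mul_le_mul_of_nonneg_left h2 (le_of_lt (hepos (n+1)))
    have h6 : ((d:ℝ)^(n+1))⁻¹ * ((d:ℝ) * Real.log ‖(f^[n] p).2‖ - (d:ℝ)*K)
        = ((d:ℝ)^n)⁻¹ * Real.log ‖(f^[n] p).2‖ - ((d:ℝ)*K) * ((d:ℝ)^(n+1))⁻¹ := by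
      rw [mul_sub, ← mul_assoc, hinv_succ n]; ring
    simp only [hGs, h3, h4]
    rw [← h6]; exact h5
  -- telescoped lower estimate on V
  have hdown_tail : ∀ (p : ℂ × ℂ) (m : ℕ), inV R₀ (f^[m] p) → ∀ k : ℕ,
      Gs m p - ((d:ℝ)*K) * ((d:ℝ)^m)⁻¹ * (1 - ((d:ℝ)^k)⁻¹) ≤ Gs (m+k) p := by
    intro p m hV k
    have hVmk : ∀ j : ℕ, inV R₀ (f^[m+j] p) := by
      intro j
      rw [add_comm, Function.iterate_add_apply]
      exact hinvIter _ hV j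
    induction k with
    | zero => simp
    | succ k ih =>
      have h1 : m + (k+1) = (m+k) + 1 := by omega
      rw [h1]
      refine le_trans ?_ (hstep_down (m+k) p (hVmk k))
      have h2 := h2e k
      have h3 : ((d:ℝ)^(m+k+1))⁻¹ = ((d:ℝ)^m)⁻¹ * ((d:ℝ)^(k+1))⁻¹ := he_add m (k+1)
      have h4 : 0 ≤ (d:ℝ)*K := mul_nonneg (by linarith) hK
      have h5 : 0 ≤ ((d:ℝ)^m)⁻¹ := le_of_lt (hepos m)
      nlinarith [mul_nonneg (mul_nonneg h4 h5) (by linarith : (0:ℝ) ≤ ((d:ℝ)^k)⁻¹ - 2*((d:ℝ)^(k+1))⁻¹)]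
  -- boundedness off V
  have hMbound : ∀ (p : ℂ × ℂ) (m : ℕ), ¬ inV R₀ (f^[m] p) →
      ∀ j ≤ m, ‖f^[j] p‖ ≤ max ‖p‖ (A^2) := by
    intro p m hm
    have hnotV : ∀ j ≤ m, ¬ inV R₀ (f^[j] p) := by
      intro j hj hV
      apply hm
      have h1 : f^[m] p = f^[m-j] (f^[j] p) := by
        rw [← Function.iterate_add_apply]
        congr 1; omega
      rw [h1]; exact hinvIter _ hV (m-j)
    set M : ℝ := max ‖p‖ (A^2) with hM'
    have hM1 : (1:ℝ) ≤ M := le_trans (by nlinarith) (le_max_right _ _)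
    have hMA : A^2 ≤ M := le_max_right _ _
    have hA0 : (0:ℝ) ≤ A := by linarith
    have hsM : Real.sqrt M * Real.sqrt M = M := Real.mul_self_sqrt (by linarith)
    have hAsM : A ≤ Real.sqrt M := by
      calc A = Real.sqrt (A^2) := (Real.sqrt_sq hA0).symm
        _ ≤ Real.sqrt M := Real.sqrt_le_sqrt hMA
    have h1sM : (1:ℝ) ≤ Real.sqrt M := by
      rw [show (1:ℝ) = Real.sqrt 1 by simp]
      exact Real.sqrt_le_sqrt hM1
    intro j
    induction j with
    | zero => intro _; simp only [Function.iterate_zero_apply, hM']; exact le_max_left _ _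
    | succ j ih =>
      intro hj1
      have hj : j ≤ m := by omega
      have hbj := ih hj
      have hnotV' : ¬ inV R₀ (f^[j+1] p) := hnotV (j+1) hj1
      have h2 : f^[j+1] p = f (f^[j] p) := Function.iterate_succ_apply' f j p
      have h3 : ‖f (f^[j] p)‖ ≤ A * max (Real.sqrt ‖f^[j] p‖) 1 := by
        apply hoff
        rw [← h2]; exact hnotV'
      rw [← h2] at h3
      have h4 : Real.sqrt ‖f^[j] p‖ ≤ Real.sqrt M := Real.sqrt_le_sqrt hbj
      have h5 : max (Real.sqrt ‖f^[j] p‖) 1 ≤ Real.sqrt M := max_le h4 h1sM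
      calc ‖f^[j+1] p‖ ≤ A * max (Real.sqrt ‖f^[j] p‖) 1 := h3
        _ ≤ A * Real.sqrt M := mul_le_mul_of_nonneg_left h5 hA0
        _ ≤ Real.sqrt M * Real.sqrt M := mul_le_mul_of_nonneg_right hAsM (by linarith)
        _ = M := hsM
  -- the uniform Cauchy estimate on norm-bounded sets
  have hcauchy : ∀ (S : ℝ) (p : ℂ × ℂ), ‖p‖ ≤ S → ∀ (m k : ℕ),
      |Gs (m+k) p - Gs m p|
        ≤ (C + (d:ℝ)*K + Real.log (max (max S (A^2)) 1)) * ((d:ℝ)^m)⁻¹ := by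
    intro S p hpS m k
    have hdK0 : 0 ≤ (d:ℝ)*K := mul_nonneg (by linarith) hK
    have hlg0 : 0 ≤ Real.log (max (max S (A^2)) 1) := Real.log_nonneg (le_max_right _ _)
    have hem := hepos m
    have hek := hepos k
    have hCup : Gs (m+k) p - Gs m p ≤ C * ((d:ℝ)^m)⁻¹ := by
      have h1 := hup_tail p m k
      nlinarith [mul_nonneg (mul_nonneg hC0 (le_of_lt hem)) (le_of_lt hek)]
    by_cases hV : inV R₀ (f^[m] p)
    · have hdn : Gs m p - Gs (m+k) p ≤ ((d:ℝ)*K) * ((d:ℝ)^m)⁻¹ := by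
        have h1 := hdown_tail p m hV k
        nlinarith [mul_nonneg (mul_nonneg hdK0 (le_of_lt hem)) (le_of_lt hek)]
      rw [abs_le]
      constructor
      · nlinarith
      · nlinarith
    · have hb : ‖f^[m] p‖ ≤ max S (A^2) := by
        refine (hMbound p m hV m le_rfl).trans ?_
        exact max_le_max hpS le_rfl
      have hGm : Gs m p ≤ ((d:ℝ)^m)⁻¹ * Real.log (max (max S (A^2)) 1) := by
        simp only [hGs]
        refine mul_le_mul_of_nonneg_left ?_ (le_of_lt hem)
        exact Real.log_le_log (by positivity) (max_le_max hb le_rfl)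
      have h0mk := hGs0 (m+k) p
      have h0m := hGs0 m p
      rw [abs_le]
      constructor
      · nlinarith
      · nlinarith
  have hT0 : ∀ S : ℝ, 0 ≤ C + (d:ℝ)*K + Real.log (max (max S (A^2)) 1) := by
    intro S
    have := Real.log_nonneg (le_max_right (max S (A^2)) 1)
    have hdK0 : 0 ≤ (d:ℝ)*K := mul_nonneg (by linarith) hK
    linarith
  -- the limit function
  have hetend : Tendsto (fun n : ℕ => ((d:ℝ)^n)⁻¹) atTop (nhds 0) :=
    (tendsto_pow_atTop_atTop_of_one_lt hd1).inv_tendsto_atTop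
  have hcseq : ∀ p : ℂ × ℂ, CauchySeq (fun n => Gs n p) := by
    intro p
    refine cauchySeq_of_le_tendsto_0
      (fun N => 2 * ((C + (d:ℝ)*K + Real.log (max (max ‖p‖ (A^2)) 1)) * ((d:ℝ)^N)⁻¹)) ?_ ?_
    · intro n m N hn hm
      have h1 : |Gs n p - Gs N p|
          ≤ (C + (d:ℝ)*K + Real.log (max (max ‖p‖ (A^2)) 1)) * ((d:ℝ)^N)⁻¹ := by
        have := hcauchy ‖p‖ p le_rfl N (n - N)
        rwa [Nat.add_sub_cancel' hn] at this
      have h2 : |Gs m p - Gs N p|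
          ≤ (C + (d:ℝ)*K + Real.log (max (max ‖p‖ (A^2)) 1)) * ((d:ℝ)^N)⁻¹ := by
        have := hcauchy ‖p‖ p le_rfl N (m - N)
        rwa [Nat.add_sub_cancel' hm] at this
      rw [Real.dist_eq]
      calc |Gs n p - Gs m p| ≤ |Gs n p - Gs N p| + |Gs N p - Gs m p| := abs_sub_le _ _ _
        _ = |Gs n p - Gs N p| + |Gs m p - Gs N p| := by rw [abs_sub_comm (Gs N p)]
        _ ≤ _ := by linarith
    · have := hetend.const_mul (2 * (C + (d:ℝ)*K + Real.log (max (max ‖p‖ (A^2)) 1)))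
      simpa [mul_assoc] using this
  choose G hG using fun p => cauchySeq_tendsto_of_complete (hcseq p)
  -- uniform bound on the distance to the limit
  have hGbound : ∀ (S : ℝ) (p : ℂ × ℂ), ‖p‖ ≤ S → ∀ m : ℕ,
      |G p - Gs m p| ≤ (C + (d:ℝ)*K + Real.log (max (max S (A^2)) 1)) * ((d:ℝ)^m)⁻¹ := by
    intro S p hpS m
    have h1 : Tendsto (fun k => Gs (m+k) p) atTop (nhds (G p)) := by
      have h := (hG p).comp (Filter.tendsto_add_atTop_nat m)
      have heq : (fun k => Gs (k+m) p) = fun k => Gs (m+k) p := by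
        funext k; rw [add_comm]
      rw [show ((fun n => Gs n p) ∘ fun n => n + m) = fun k => Gs (k+m) p from rfl, heq] at h
      exact h
    have h2 : Tendsto (fun k => |Gs (m+k) p - Gs m p|) atTop (nhds (|G p - Gs m p|)) :=
      ((h1.sub_const (Gs m p))).abs
    exact le_of_tendsto' h2 (fun k => hcauchy S p hpS m k)
  -- uniform convergence on bounded sets
  have hTUO : ∀ B : Set (ℂ × ℂ), Bornology.IsBounded B →
      TendstoUniformlyOn Gs G Filter.atTop B := by
    intro B hB
    obtain ⟨S, hS⟩ := (isBounded_iff_forall_norm_le).1 hB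
    rw [Metric.tendstoUniformlyOn_iff]
    intro ε hε
    have h0 : Tendsto
        (fun m : ℕ => (C + (d:ℝ)*K + Real.log (max (max S (A^2)) 1)) * ((d:ℝ)^m)⁻¹)
        atTop (nhds 0) := by
      have := hetend.const_mul (C + (d:ℝ)*K + Real.log (max (max S (A^2)) 1))
      simpa using this
    filter_upwards [h0.eventually (gt_mem_nhds hε)] with n hn p hp
    rw [Real.dist_eq]
    exact lt_of_le_of_lt (hGbound S p (hS p hp) n) hn
  -- continuity
  have hfc : Continuous f := by rw [hfF]; exact S13.FF_continuous L
  have hGscont : ∀ n : ℕ, Continuous (Gs n) := by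
    intro n
    have h1 : Continuous fun p : ℂ × ℂ => max ‖f^[n] p‖ 1 :=
      (continuous_norm.comp (hfc.iterate n)).max continuous_const
    exact continuous_const.mul (h1.log fun p =>
      ne_of_gt (lt_of_lt_of_le one_pos (le_max_right _ _)))
  have hGcont : Continuous G := by
    refine continuous_iff_continuousAt.2 fun x => ?_
    have hball : Bornology.IsBounded (Metric.ball x 1) := Metric.isBounded_ball
    have hco : ContinuousOn G (Metric.ball x 1) :=
      (hTUO _ hball).continuousOn (Filter.Frequently.of_forall fun n => (hGscont n).continuousOn)
    exact hco.continuousAt (Metric.ball_mem_nhds x one_pos)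
  -- nonnegativity
  have hGnn : ∀ p, 0 ≤ G p := fun p => ge_of_tendsto' (hG p) (fun n => hGs0 n p)
  -- functional equation
  have hfe : ∀ p, G (f p) = (d:ℝ) * G p := by
    intro p
    have h1 : Tendsto (fun n => Gs n (f p)) atTop (nhds (G (f p))) := hG (f p)
    have h2 : ∀ n : ℕ, Gs n (f p) = (d:ℝ) * Gs (n+1) p := by
      intro n
      simp only [hGs]
      rw [← Function.iterate_succ_apply f n p, ← mul_assoc,
        mul_comm (d:ℝ) (((d:ℝ)^(n+1))⁻¹), hinv_succ n]
    simp only [h2] at h1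
    have h3 : Tendsto (fun n => (d:ℝ) * Gs (n+1) p) atTop (nhds ((d:ℝ) * G p)) := by
      have h4 := (hG p).comp (Filter.tendsto_add_atTop_nat 1)
      exact (h4.const_mul (d:ℝ))
    exact tendsto_nhds_unique h1 h3
  -- upper bound by log⁺
  have hMb : ∀ p, G p - Real.log (max ‖p‖ 1) ≤ C := by
    intro p
    have h1 : ∀ n, Gs n p ≤ Real.log (max ‖p‖ 1) + C := by
      intro n
      have h2 := hup_tail p 0 n
      have h3 : Gs 0 p = Real.log (max ‖p‖ 1) := by simp [hGs]
      rw [zero_add, h3, pow_zero, inv_one, mul_one] at h2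
      have h4 := hepos n
      have h5 := he_le_one n
      nlinarith [mul_nonneg hC0 (le_of_lt h4)]
    have h6 := le_of_tendsto' (hG p) h1
    linarith
  -- characterization of the zero set
  have hzero : ∀ p, G p = 0 ↔ ∃ R : ℝ, ∀ n : ℕ, ‖f^[n] p‖ ≤ R := by
    intro p
    constructor
    · intro hGp0
      by_contra hnb
      push_neg at hnb
      have hN : ∃ N, inV R₀ (f^[N] p) := by
        by_contra hno
        push_neg at hno
        obtain ⟨n, hn⟩ := hnb (max ‖p‖ (A^2))
        exact absurd (hMbound p n (hno n) n le_rfl) (not_le.2 hn)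
      obtain ⟨N, hVN⟩ := hN
      have hlow : ∀ k : ℕ, ((d:ℝ)^N)⁻¹ ≤ Gs (N+k) p := by
        intro k
        have h1 := hψiter (f^[N] p) hVN k
        have hψN := hψ1 _ hVN
        have h2 : (d:ℝ)^k ≤ Real.log ‖(f^[k] (f^[N] p)).2‖ - K := by
          nlinarith [pow_pos hd0 k]
        have h3 : f^[k] (f^[N] p) = f^[N+k] p := by
          rw [add_comm, Function.iterate_add_apply]
        rw [h3] at h2
        have hV' : inV R₀ (f^[N+k] p) := by
          rw [← h3]; exact hinvIter _ hVN k
        have h4 : Real.log ‖(f^[N+k] p).2‖ ≤ Real.log (max ‖f^[N+k] p‖ 1) := by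
          refine Real.log_le_log (lt_of_lt_of_le hR₀0 hV'.1) ?_
          exact le_trans (norm_snd_le _) (le_max_left _ _)
        have h5 : (d:ℝ)^k ≤ Real.log (max ‖f^[N+k] p‖ 1) := by linarith
        have h6 : ((d:ℝ)^N)⁻¹ = ((d:ℝ)^(N+k))⁻¹ * (d:ℝ)^k := by
          rw [he_add N k, mul_assoc, inv_mul_cancel₀ (ne_of_gt (pow_pos hd0 k)), mul_one]
        rw [h6]
        simp only [hGs]
        exact mul_le_mul_of_nonneg_left h5 (le_of_lt (hepos _))
      have h7 : Tendsto (fun k => Gs (N+k) p) atTop (nhds (G p)) := by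
        have h := (hG p).comp (Filter.tendsto_add_atTop_nat N)
        have heq : (fun k => Gs (k+N) p) = fun k => Gs (N+k) p := by
          funext k; rw [add_comm]
        rw [show ((fun n => Gs n p) ∘ fun n => n + N) = fun k => Gs (k+N) p from rfl, heq] at h
        exact h
      have h8 : ((d:ℝ)^N)⁻¹ ≤ G p := ge_of_tendsto' h7 hlow
      rw [hGp0] at h8
      exact absurd h8 (not_le.2 (hepos N))
    · rintro ⟨R, hR⟩
      have h1 : ∀ n, Gs n p ≤ ((d:ℝ)^n)⁻¹ * Real.log (max R 1) := by
        intro n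
        simp only [hGs]
        refine mul_le_mul_of_nonneg_left ?_ (le_of_lt (hepos n))
        exact Real.log_le_log (by positivity) (max_le_max (hR n) le_rfl)
      have h2 : Tendsto (fun n => Gs n p) atTop (nhds 0) := by
        refine squeeze_zero (fun n => hGs0 n p) h1 ?_
        have := hetend.mul_const (Real.log (max R 1))
        simpa using this
      exact tendsto_nhds_unique (hG p) h2
  exact ⟨G, hGcont, hGnn, hTUO, hfe, ⟨C, hMb⟩, hzero⟩
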